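/- arXiv:2003.09919 — 2 statements merged into one kernel-verified Lean document; each statement's English description precedes it below -/
import Mathlib

section
/- Let Y be a metric space, κ ∈ ℝ, c ∈ Y, and let x₀, x₁, …, x_N (N ≥ 2) be points of Y, pairwise situations as follows: x_{j} ≠ x_{j+1} for all j, c ≠ x_j for all j, and the points lie in order on a geodesic, i.e. d(x_i, x_k) = Σ_{j=i}^{k−1} d(x_j, x_{j+1}) for all 0 ≤ i ≤ k ≤ N. If κ > 0, assume in addition that d(c, x_i) + d(c, x_j) + d(x_i, x_j) < 2π/√κ for all i, j. Suppose that for every 0 < j < N one has ∠̃_κ x_j(c, x_{j−1}) + ∠̃_κ x_j(c, x_{j+1}) ≤ π. Then the comparison angles are monotone along the chain: for all 0 ≤ i < j < k ≤ N, ∠̃_κ x_i(c, x_k) ≤ ∠̃_κ x_i(c, x_j) and ∠̃_κ x_k(c, x_i) ≤ ∠̃_κ x_k(c, x_j). In particular ∠̃_κ x_0(c, x_N) ≤ ∠̃_κ x_0(c, x_1). -/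
/-- The κ-comparison angle: the angle opposite the side of length `c` in the triangle with
side lengths `a`, `b`, `c` in the model plane of constant curvature `κ`. -/
noncomputable def compAngle (κ a b c : ℝ) : ℝ :=
  if κ = 0 then Real.arccos ((a ^ 2 + b ^ 2 - c ^ 2) / (2 * a * b))
  else if 0 < κ then
    Real.arccos ((Real.cos (Real.sqrt κ * c) -
      Real.cos (Real.sqrt κ * a) * Real.cos (Real.sqrt κ * b)) /
      (Real.sin (Real.sqrt κ * a) * Real.sin (Real.sqrt κ * b)))
  else
    Real.arccos ((Real.cosh (Real.sqrt (-κ) * a) * Real.cosh (Real.sqrt (-κ) * b) -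
      Real.cosh (Real.sqrt (-κ) * c)) /
      (Real.sinh (Real.sqrt (-κ) * a) * Real.sinh (Real.sqrt (-κ) * b)))

/-- The κ-comparison angle `∠̃_κ p (x, y)`. -/
noncomputable def compAngleAt {Y : Type*} [MetricSpace Y] (κ : ℝ) (p x y : Y) : ℝ :=
  compAngle κ (dist p x) (dist p y) (dist x y)

section ChainAux
open Real


lemma arccos_anti : Antitone Real.arccos := fun u v h => by
  simp only [Real.arccos]
  exact sub_le_sub_left (Real.monotone_arcsin h) _

lemma neg_le_of_arccos_add {p q : ℝ} (hp1 : -1 ≤ p) (hp2 : p ≤ 1) (hq1 : -1 ≤ q) (hq2 : q ≤ 1)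
    (H : Real.arccos p + Real.arccos q ≤ Real.pi) : -p ≤ q := by
  have h1 : Real.arccos q ≤ Real.pi - Real.arccos p := by linarith
  have h2 := Real.cos_le_cos_of_nonneg_of_le_pi (Real.arccos_nonneg q)
    (by linarith [Real.arccos_nonneg p]) h1
  rwa [Real.cos_pi_sub, Real.cos_arccos hp1 hp2, Real.cos_arccos hq1 hq2] at h2

lemma cos_le_cos_aux {x y : ℝ} (hx : 0 ≤ x) (hxy : x ≤ y) (h2 : x + y ≤ 2 * Real.pi) :
    Real.cos y ≤ Real.cos x := by
  rcases le_or_gt y Real.pi with h | h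
  · exact Real.cos_le_cos_of_nonneg_of_le_pi hx h hxy
  · rw [← Real.cos_two_pi_sub y]
    exact Real.cos_le_cos_of_nonneg_of_le_pi hx (by linarith) (by linarith)

lemma stepE {a m b s t : ℝ} (ha : 0 < a) (hm : 0 < m) (hb : 0 < b) (hs : 0 < s) (ht : 0 < t)
    (t1 : a ≤ m + s) (t2 : m ≤ a + s) (t3 : s ≤ a + m)
    (t4 : b ≤ m + t) (t5 : m ≤ b + t) (t6 : t ≤ b + m)
    (H : Real.arccos ((m ^ 2 + s ^ 2 - a ^ 2) / (2 * m * s)) +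
      Real.arccos ((m ^ 2 + t ^ 2 - b ^ 2) / (2 * m * t)) ≤ Real.pi) :
    Real.arccos ((a ^ 2 + (s + t) ^ 2 - b ^ 2) / (2 * a * (s + t))) ≤
      Real.arccos ((a ^ 2 + s ^ 2 - m ^ 2) / (2 * a * s)) := by
  have hms : (0:ℝ) < 2 * m * s := by positivity
  have hmt : (0:ℝ) < 2 * m * t := by positivity
  have hp1 : -1 ≤ (m ^ 2 + s ^ 2 - a ^ 2) / (2 * m * s) := by
    rw [le_div_iff₀ hms]; nlinarith
  have hp2 : (m ^ 2 + s ^ 2 - a ^ 2) / (2 * m * s) ≤ 1 := by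
    rw [div_le_one hms]; nlinarith
  have hq1 : -1 ≤ (m ^ 2 + t ^ 2 - b ^ 2) / (2 * m * t) := by
    rw [le_div_iff₀ hmt]; nlinarith
  have hq2 : (m ^ 2 + t ^ 2 - b ^ 2) / (2 * m * t) ≤ 1 := by
    rw [div_le_one hmt]; nlinarith
  have hpq := neg_le_of_arccos_add hp1 hp2 hq1 hq2 H
  have cross : (-(m ^ 2 + s ^ 2 - a ^ 2)) * (2 * m * t) ≤ (m ^ 2 + t ^ 2 - b ^ 2) * (2 * m * s) :=
    (div_le_div_iff₀ hms hmt).mp (by rw [neg_div]; exact hpq)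
  have key : 0 ≤ s * (m ^ 2 + t ^ 2 - b ^ 2) + t * (m ^ 2 + s ^ 2 - a ^ 2) := by nlinarith
  apply arccos_anti
  rw [div_le_div_iff₀ (by positivity) (by positivity)]
  nlinarith [key, ha]

lemma stepH {A M B S T : ℝ} (hA : 0 < A) (hM : 0 < M) (hB : 0 < B) (hS : 0 < S) (hT : 0 < T)
    (t1 : A ≤ M + S) (t2 : M ≤ A + S) (t3 : S ≤ A + M)
    (t4 : B ≤ M + T) (t5 : M ≤ B + T) (t6 : T ≤ B + M)
    (H : Real.arccos ((Real.cosh M * Real.cosh S - Real.cosh A) / (Real.sinh M * Real.sinh S)) +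
      Real.arccos ((Real.cosh M * Real.cosh T - Real.cosh B) / (Real.sinh M * Real.sinh T)) ≤
      Real.pi) :
    Real.arccos ((Real.cosh A * Real.cosh (S + T) - Real.cosh B) /
        (Real.sinh A * Real.sinh (S + T))) ≤
      Real.arccos ((Real.cosh A * Real.cosh S - Real.cosh M) / (Real.sinh A * Real.sinh S)) := by
  have shA : 0 < Real.sinh A := Real.sinh_pos_iff.2 hA
  have shM : 0 < Real.sinh M := Real.sinh_pos_iff.2 hM
  have shS : 0 < Real.sinh S := Real.sinh_pos_iff.2 hS
  have shT : 0 < Real.sinh T := Real.sinh_pos_iff.2 hT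
  have shST : 0 < Real.sinh (S + T) := Real.sinh_pos_iff.2 (by linarith)
  have hMS : 0 < Real.sinh M * Real.sinh S := mul_pos shM shS
  have hMT : 0 < Real.sinh M * Real.sinh T := mul_pos shM shT
  have hp1 : -1 ≤ (Real.cosh M * Real.cosh S - Real.cosh A) / (Real.sinh M * Real.sinh S) := by
    rw [le_div_iff₀ hMS]
    have h := Real.cosh_le_cosh.2 (show |A| ≤ |M + S| by
      rw [abs_of_pos hA, abs_of_pos (by linarith : (0:ℝ) < M + S)]; exact t1)
    rw [Real.cosh_add] at h; linarith
  have hp2 : (Real.cosh M * Real.cosh S - Real.cosh A) / (Real.sinh M * Real.sinh S) ≤ 1 := by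
    rw [div_le_one hMS]
    have h := Real.cosh_le_cosh.2 (show |M - S| ≤ |A| by
      rw [abs_of_pos hA]; exact abs_le.mpr ⟨by linarith, by linarith⟩)
    rw [Real.cosh_sub] at h; linarith
  have hq1 : -1 ≤ (Real.cosh M * Real.cosh T - Real.cosh B) / (Real.sinh M * Real.sinh T) := by
    rw [le_div_iff₀ hMT]
    have h := Real.cosh_le_cosh.2 (show |B| ≤ |M + T| by
      rw [abs_of_pos hB, abs_of_pos (by linarith : (0:ℝ) < M + T)]; exact t4)
    rw [Real.cosh_add] at h; linarith
  have hq2 : (Real.cosh M * Real.cosh T - Real.cosh B) / (Real.sinh M * Real.sinh T) ≤ 1 := by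
    rw [div_le_one hMT]
    have h := Real.cosh_le_cosh.2 (show |M - T| ≤ |B| by
      rw [abs_of_pos hB]; exact abs_le.mpr ⟨by linarith, by linarith⟩)
    rw [Real.cosh_sub] at h; linarith
  have hpq := neg_le_of_arccos_add hp1 hp2 hq1 hq2 H
  have cross : (-(Real.cosh M * Real.cosh S - Real.cosh A)) * (Real.sinh M * Real.sinh T) ≤
      (Real.cosh M * Real.cosh T - Real.cosh B) * (Real.sinh M * Real.sinh S) :=
    (div_le_div_iff₀ hMS hMT).mp (by rw [neg_div]; exact hpq)
  have key : Real.cosh B * Real.sinh S ≤ Real.cosh M * Real.cosh T * Real.sinh S +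
      Real.sinh T * (Real.cosh M * Real.cosh S - Real.cosh A) := by nlinarith
  have idm : Real.cosh A * Real.sinh T * (Real.cosh S ^ 2 - Real.sinh S ^ 2) =
      Real.cosh A * Real.sinh T := by rw [Real.cosh_sq_sub_sinh_sq]; ring
  have E : (Real.cosh A * Real.cosh S - Real.cosh M) * Real.sinh (S + T) ≤
      (Real.cosh A * Real.cosh (S + T) - Real.cosh B) * Real.sinh S := by
    rw [Real.sinh_add, Real.cosh_add]; nlinarith [key, idm]
  apply arccos_anti
  rw [div_le_div_iff₀ (mul_pos shA shS) (mul_pos shA shST)]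
  nlinarith [E, shA]

set_option maxHeartbeats 1000000 in
lemma stepS {A M B S T : ℝ} (hA : 0 < A) (hM : 0 < M) (hB : 0 < B) (hS : 0 < S) (hT : 0 < T)
    (hπA : A < Real.pi) (hπB : B < Real.pi) (hπM : M < Real.pi) (hπST : S + T < Real.pi)
    (per1 : A + M + S ≤ 2 * Real.pi) (per2 : B + M + T ≤ 2 * Real.pi)
    (t1 : A ≤ M + S) (t2 : M ≤ A + S) (t3 : S ≤ A + M)
    (t4 : B ≤ M + T) (t5 : M ≤ B + T) (t6 : T ≤ B + M)
    (H : Real.arccos ((Real.cos A - Real.cos M * Real.cos S) / (Real.sin M * Real.sin S)) +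
      Real.arccos ((Real.cos B - Real.cos M * Real.cos T) / (Real.sin M * Real.sin T)) ≤
      Real.pi) :
    Real.arccos ((Real.cos B - Real.cos A * Real.cos (S + T)) /
        (Real.sin A * Real.sin (S + T))) ≤
      Real.arccos ((Real.cos M - Real.cos A * Real.cos S) / (Real.sin A * Real.sin S)) := by
  have sA : 0 < Real.sin A := Real.sin_pos_of_pos_of_lt_pi hA hπA
  have sB : 0 < Real.sin B := Real.sin_pos_of_pos_of_lt_pi hB hπB
  have sM : 0 < Real.sin M := Real.sin_pos_of_pos_of_lt_pi hM hπM
  have sS : 0 < Real.sin S := Real.sin_pos_of_pos_of_lt_pi hS (by linarith)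
  have sT : 0 < Real.sin T := Real.sin_pos_of_pos_of_lt_pi hT (by linarith)
  have sST : 0 < Real.sin (S + T) := Real.sin_pos_of_pos_of_lt_pi (by linarith) hπST
  have hMS : 0 < Real.sin M * Real.sin S := mul_pos sM sS
  have hMT : 0 < Real.sin M * Real.sin T := mul_pos sM sT
  have hp1 : -1 ≤ (Real.cos A - Real.cos M * Real.cos S) / (Real.sin M * Real.sin S) := by
    rw [le_div_iff₀ hMS]
    have h := cos_le_cos_aux hA.le t1 (by linarith)
    rw [Real.cos_add] at h; linarith
  have hp2 : (Real.cos A - Real.cos M * Real.cos S) / (Real.sin M * Real.sin S) ≤ 1 := by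
    rw [div_le_one hMS]
    have h := cos_le_cos_aux (abs_nonneg (M - S))
      (abs_le.mpr ⟨by linarith, by linarith⟩ : |M - S| ≤ A)
      (by cases abs_cases (M - S) with
        | inl h' => linarith [h'.1]
        | inr h' => linarith [h'.1])
    rw [Real.cos_abs, Real.cos_sub] at h; linarith
  have hq1 : -1 ≤ (Real.cos B - Real.cos M * Real.cos T) / (Real.sin M * Real.sin T) := by
    rw [le_div_iff₀ hMT]
    have h := cos_le_cos_aux hB.le t4 (by linarith)
    rw [Real.cos_add] at h; linarith
  have hq2 : (Real.cos B - Real.cos M * Real.cos T) / (Real.sin M * Real.sin T) ≤ 1 := by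
    rw [div_le_one hMT]
    have h := cos_le_cos_aux (abs_nonneg (M - T))
      (abs_le.mpr ⟨by linarith, by linarith⟩ : |M - T| ≤ B)
      (by cases abs_cases (M - T) with
        | inl h' => linarith [h'.1]
        | inr h' => linarith [h'.1])
    rw [Real.cos_abs, Real.cos_sub] at h; linarith
  have hpq := neg_le_of_arccos_add hp1 hp2 hq1 hq2 H
  have cross : (-(Real.cos A - Real.cos M * Real.cos S)) * (Real.sin M * Real.sin T) ≤
      (Real.cos B - Real.cos M * Real.cos T) * (Real.sin M * Real.sin S) :=
    (div_le_div_iff₀ hMS hMT).mp (by rw [neg_div]; exact hpq)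
  have key : Real.cos M * Real.cos T * Real.sin S -
      Real.sin T * (Real.cos A - Real.cos M * Real.cos S) ≤ Real.cos B * Real.sin S := by
    nlinarith
  have idm : Real.cos A * Real.sin T * (Real.sin S ^ 2 + Real.cos S ^ 2) =
      Real.cos A * Real.sin T := by rw [Real.sin_sq_add_cos_sq]; ring
  have E : (Real.cos M - Real.cos A * Real.cos S) * Real.sin (S + T) ≤
      (Real.cos B - Real.cos A * Real.cos (S + T)) * Real.sin S := by
    rw [Real.sin_add, Real.cos_add]; nlinarith [key, idm]
  apply arccos_anti
  rw [div_le_div_iff₀ (mul_pos sA sS) (mul_pos sA sST)]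
  nlinarith [E, sA]

lemma step_real (κ : ℝ) {a m b s t : ℝ}
    (ha : 0 < a) (hm : 0 < m) (hb : 0 < b) (hs : 0 < s) (ht : 0 < t)
    (t1 : a ≤ m + s) (t2 : m ≤ a + s) (t3 : s ≤ a + m)
    (t4 : b ≤ m + t) (t5 : m ≤ b + t) (t6 : t ≤ b + m)
    (t7 : s + t ≤ a + b)
    (hper : 0 < κ → a + m + s < 2 * Real.pi / Real.sqrt κ ∧
      b + m + t < 2 * Real.pi / Real.sqrt κ ∧ a + b + (s + t) < 2 * Real.pi / Real.sqrt κ)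
    (H : compAngle κ m s a + compAngle κ m t b ≤ Real.pi) :
    compAngle κ a (s + t) b ≤ compAngle κ a s m := by
  rcases lt_trichotomy κ 0 with hκ | hκ | hκ
  · have hne : κ ≠ 0 := ne_of_lt hκ
    have hnp : ¬ 0 < κ := not_lt.2 hκ.le
    simp only [compAngle, if_neg hne, if_neg hnp] at H ⊢
    have hl : 0 < Real.sqrt (-κ) := Real.sqrt_pos.2 (by linarith)
    set l := Real.sqrt (-κ)
    have sc : ∀ u v w : ℝ, u ≤ v + w → l * u ≤ l * v + l * w := by
      intro u v w h; nlinarith [hl.le]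
    rw [mul_add]
    exact stepH (mul_pos hl ha) (mul_pos hl hm) (mul_pos hl hb) (mul_pos hl hs) (mul_pos hl ht)
      (sc a m s t1) (sc m a s t2) (sc s a m t3) (sc b m t t4) (sc m b t t5) (sc t b m t6) H
  · subst hκ
    simp only [compAngle, if_pos rfl] at H ⊢
    exact stepE ha hm hb hs ht t1 t2 t3 t4 t5 t6 H
  · have hne : κ ≠ 0 := ne_of_gt hκ
    simp only [compAngle, if_neg hne, if_pos hκ] at H ⊢
    have hl : 0 < Real.sqrt κ := Real.sqrt_pos.2 hκ
    set l := Real.sqrt κ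
    obtain ⟨P1, P2, P3⟩ := hper hκ
    have sc : ∀ u v w : ℝ, u ≤ v + w → l * u ≤ l * v + l * w := by
      intro u v w h; nlinarith [hl.le]
    have hcancel : l * (2 * Real.pi / l) = 2 * Real.pi := by field_simp
    have scper : ∀ u v w : ℝ, u + v + w < 2 * Real.pi / l →
        l * u + l * v + l * w < 2 * Real.pi := by
      intro u v w h
      have h2 := mul_lt_mul_of_pos_left h hl
      nlinarith
    have K1 := scper _ _ _ P1
    have K2 := scper _ _ _ P2
    have K3 := scper _ _ _ P3
    have hπA : l * a < Real.pi := by have := sc a m s t1; linarith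
    have hπB : l * b < Real.pi := by have := sc b m t t4; linarith
    have hπM : l * m < Real.pi := by have := sc m a s t2; linarith
    have hπST : l * s + l * t < Real.pi := by
      have h1 := sc (s + t) a b t7
      rw [mul_add] at h1
      linarith
    rw [mul_add]
    exact stepS (mul_pos hl ha) (mul_pos hl hm) (mul_pos hl hb) (mul_pos hl hs) (mul_pos hl ht)
      hπA hπB hπM hπST (by linarith) (by linarith)
      (sc a m s t1) (sc m a s t2) (sc s a m t3) (sc b m t t4) (sc m b t t5) (sc t b m t6) H

lemma step_metric {Y : Type*} [MetricSpace Y] (κ : ℝ) (c y z w : Y)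
    (hcy : 0 < dist c y) (hcz : 0 < dist c z) (hcw : 0 < dist c w)
    (hyz : 0 < dist y z) (hzw : 0 < dist z w)
    (hsum : dist y w = dist y z + dist z w)
    (hper : 0 < κ → dist c y + dist c z + dist y z < 2 * Real.pi / Real.sqrt κ ∧
      dist c z + dist c w + dist z w < 2 * Real.pi / Real.sqrt κ ∧
      dist c y + dist c w + dist y w < 2 * Real.pi / Real.sqrt κ)
    (H : compAngleAt κ z c y + compAngleAt κ z c w ≤ Real.pi) :
    compAngleAt κ y c w ≤ compAngleAt κ y c z ∧
    compAngleAt κ w c y ≤ compAngleAt κ w c z := by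
  have d1 : dist c y ≤ dist c z + dist y z := by
    have := dist_triangle c z y; rwa [dist_comm z y] at this
  have d2 : dist c z ≤ dist c y + dist y z := dist_triangle c y z
  have d3 : dist y z ≤ dist c y + dist c z := by
    have := dist_triangle y c z; rwa [dist_comm y c] at this
  have d4 : dist c w ≤ dist c z + dist z w := dist_triangle c z w
  have d5 : dist c z ≤ dist c w + dist z w := by
    have := dist_triangle c w z; rwa [dist_comm w z] at this
  have d6 : dist z w ≤ dist c w + dist c z := by
    have := dist_triangle z c w; rw [dist_comm z c] at this; linarith
  have d7 : dist y z + dist z w ≤ dist c y + dist c w := by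
    have := dist_triangle y c w; rw [dist_comm y c] at this; linarith [hsum]
  simp only [compAngleAt] at H ⊢
  rw [dist_comm z c, dist_comm z y] at H
  rw [dist_comm y c, dist_comm w c, dist_comm w y, dist_comm w z, hsum]
  constructor
  · exact step_real κ hcy hcz hcw hyz hzw d1 d2 d3 d4 (by linarith) (by linarith) d7
      (fun hκ => ⟨(hper hκ).1, by linarith [(hper hκ).2.1], by rw [← hsum]; exact (hper hκ).2.2⟩) H
  · have H' : compAngle κ (dist c z) (dist z w) (dist c w) +
        compAngle κ (dist c z) (dist y z) (dist c y) ≤ Real.pi := by linarith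
    have := step_real κ hcw hcz hcy hzw hyz d4 (by linarith : dist c z ≤ dist c w + dist z w)
      (by linarith : dist z w ≤ dist c w + dist c z) d1 d2 d3 (by linarith)
      (fun hκ => ⟨by linarith [(hper hκ).2.1], by linarith [(hper hκ).1],
        by linarith [(hper hκ).2.2]⟩) H'
    rwa [add_comm (dist z w) (dist y z)] at this

end ChainAux

/-- Monotonicity of comparison angles along a chain of points lying in order on a geodesic,
obtained by iterating Alexandrov's Lemma. -/
theorem chain_compAngle_monotone {Y : Type*} [MetricSpace Y] (κ : ℝ) (c : Y)
    (N : ℕ) (hN : 2 ≤ N) (x : ℕ → Y)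
    (hadj : ∀ j < N, x j ≠ x (j + 1))
    (hc : ∀ j ≤ N, c ≠ x j)
    (horder : ∀ i k, i ≤ k → k ≤ N →
      dist (x i) (x k) = ∑ j ∈ Finset.Ico i k, dist (x j) (x (j + 1)))
    (hperim : 0 < κ → ∀ i ≤ N, ∀ j ≤ N,
      dist c (x i) + dist c (x j) + dist (x i) (x j) < 2 * Real.pi / Real.sqrt κ)
    (hang : ∀ j, 0 < j → j < N →
      compAngleAt κ (x j) c (x (j - 1)) + compAngleAt κ (x j) c (x (j + 1)) ≤ Real.pi) :
    (∀ i j k, i < j → j < k → k ≤ N →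
      compAngleAt κ (x i) c (x k) ≤ compAngleAt κ (x i) c (x j) ∧
      compAngleAt κ (x k) c (x i) ≤ compAngleAt κ (x k) c (x j)) ∧
    compAngleAt κ (x 0) c (x N) ≤ compAngleAt κ (x 0) c (x 1) := by
  have hdpos : ∀ i k, i < k → k ≤ N → 0 < dist (x i) (x k) := by
    intro i k hik hkN
    rw [horder i k hik.le hkN]
    apply Finset.sum_pos
    · intro j hj
      rw [Finset.mem_Ico] at hj
      exact dist_pos.2 (hadj j (by omega))
    · exact Finset.nonempty_Ico.2 hik
  have hsplit : ∀ i j k, i ≤ j → j ≤ k → k ≤ N →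
      dist (x i) (x k) = dist (x i) (x j) + dist (x j) (x k) := by
    intro i j k hij hjk hkN
    rw [horder i j hij (le_trans hjk hkN), horder j k hjk hkN,
      horder i k (le_trans hij hjk) hkN, Finset.sum_Ico_consecutive _ hij hjk]
  have main : ∀ d : ℕ, ∀ i j k, i < j → j < k → k ≤ N → k - i ≤ d →
      compAngleAt κ (x i) c (x k) ≤ compAngleAt κ (x i) c (x j) ∧
      compAngleAt κ (x k) c (x i) ≤ compAngleAt κ (x k) c (x j) := by
    intro d
    induction d with
    | zero => intro i j k h1 h2 h3 h4; omega
    | succ d ih =>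
      intro i j k hij hjk hkN hd
      have ha1 : compAngleAt κ (x j) c (x i) ≤ compAngleAt κ (x j) c (x (j - 1)) := by
        by_cases he : i = j - 1
        · exact le_of_eq (by rw [he])
        · exact (ih i (j - 1) j (by omega) (by omega) (by omega) (by omega)).2
      have ha2 : compAngleAt κ (x j) c (x k) ≤ compAngleAt κ (x j) c (x (j + 1)) := by
        by_cases he : k = j + 1
        · exact le_of_eq (by rw [he])
        · exact (ih j (j + 1) k (by omega) (by omega) (by omega) (by omega)).1
      have Hsum : compAngleAt κ (x j) c (x i) + compAngleAt κ (x j) c (x k) ≤ Real.pi := by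
        have := hang j (by omega) (by omega)
        linarith
      exact step_metric κ c (x i) (x j) (x k)
        (dist_pos.2 (hc i (by omega))) (dist_pos.2 (hc j (by omega)))
        (dist_pos.2 (hc k (by omega)))
        (hdpos i j hij (by omega)) (hdpos j k hjk hkN)
        (hsplit i j k hij.le hjk.le hkN)
        (fun hκ => ⟨hperim hκ i (by omega) j (by omega), hperim hκ j (by omega) k (by omega),
          hperim hκ i (by omega) k (by omega)⟩)
        Hsum
  refine ⟨fun i j k h1 h2 h3 => main (k - i) i j k h1 h2 h3 le_rfl, ?_⟩
  exact (main N 0 1 N (by omega) (by omega) le_rfl (by omega)).1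
end

section
/- Let U and V be metric spaces, with V a geodesic space, and let f : U → V be a 1-Lipschitz surjection satisfying the length-preserving lifting property. Then for every p̂ ∈ U and every q ∈ V there exists q̂ ∈ U with f(q̂) = q and d_U(p̂, q̂) = d_V(f(p̂), q). -/
/-- `γ : [0,T] → Y` is a unit-speed geodesic. -/
def IsUnitSpeedOn {Y : Type*} [MetricSpace Y] (γ : ℝ → Y) (T : ℝ) : Prop :=
  ∀ s ∈ Set.Icc (0 : ℝ) T, ∀ t ∈ Set.Icc (0 : ℝ) T, dist (γ s) (γ t) = |s - t|

/-- `γ` is a (unit-speed) geodesic from `a` to `b`, parametrized on `[0, dist a b]`. -/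
def IsGeodesicFromTo {Y : Type*} [MetricSpace Y] (a b : Y) (γ : ℝ → Y) : Prop :=
  γ 0 = a ∧ γ (dist a b) = b ∧ IsUnitSpeedOn γ (dist a b)

/-- A geodesic space: any two points are joined by a geodesic. -/
def IsGeodesicSpace (Y : Type*) [MetricSpace Y] : Prop :=
  ∀ x y : Y, ∃ γ : ℝ → Y, IsGeodesicFromTo x y γ

/-- `f : U → V` satisfies the length-preserving lifting property: every geodesic
`γ : [0,T] → V` lifts, at any point of the fiber over `γ 0`, to a continuous curve in `U`
whose restriction to `[0,t]` has length `t` for every `t ∈ (0,T]`. -/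
def LengthPreservingLifting {U V : Type*} [MetricSpace U] [MetricSpace V] (f : U → V) : Prop :=
  ∀ T : ℝ, 0 ≤ T → ∀ γ : ℝ → V, IsUnitSpeedOn γ T →
    ∀ phat : U, f phat = γ 0 →
      ∃ γhat : ℝ → U, ContinuousOn γhat (Set.Icc 0 T) ∧ γhat 0 = phat ∧
        (∀ t ∈ Set.Icc (0 : ℝ) T, f (γhat t) = γ t) ∧
        (∀ t : ℝ, 0 < t → t ≤ T → eVariationOn γhat (Set.Icc 0 t) = ENNReal.ofReal t)

/-- Distance-realizing lifts of points: if `f` is a 1-Lipschitz surjection onto a geodesic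
space with the length-preserving lifting property, then any point of `V` lifts to a point
of `U` at the same distance from a prescribed point of the fiber. -/
theorem exists_dist_realizing_lift {U V : Type*} [MetricSpace U] [MetricSpace V]
    (hV : IsGeodesicSpace V) (f : U → V) (hsurj : Function.Surjective f)
    (hlip : LipschitzWith 1 f) (hlift : LengthPreservingLifting f) :
    ∀ (phat : U) (q : V), ∃ qhat : U, f qhat = q ∧ dist phat qhat = dist (f phat) q := by

  intro phat q
  obtain ⟨γ, hγ0, hγT, hunit⟩ := hV (f phat) q
  set T := dist (f phat) q with hT
  have hT0 : 0 ≤ T := dist_nonneg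
  rcases eq_or_lt_of_le hT0 with hTeq | hTpos
  · refine ⟨phat, ?_, by simp [← hTeq]⟩
    have : q = f phat := by
      have := dist_eq_zero.mp hTeq.symm
      exact this.symm ▸ rfl
    simp [this]
  · obtain ⟨γhat, _, h0, hcomp, hvar⟩ := hlift T hT0 γ hunit phat hγ0.symm
    refine ⟨γhat T, ?_, ?_⟩
    · rw [hcomp T ⟨hT0, le_refl T⟩, hγT]
    · apply le_antisymm
      · have h1 : edist (γhat 0) (γhat T) ≤ eVariationOn γhat (Set.Icc 0 T) :=
          eVariationOn.edist_le γhat ⟨le_refl _, hT0⟩ ⟨hT0, le_refl _⟩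
        rw [hvar T hTpos le_rfl, h0] at h1
        have := (edist_le_ofReal hT0).mp h1
        simpa [dist_edist] using this
      · have := hlip.dist_le_mul phat (γhat T)
        rw [hcomp T ⟨hT0, le_refl T⟩, hγT] at this
        simpa using this
end
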